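/- The function f₀(x) = (1/π)·(√((2−|x|)/|x|) − arctan(√((2−|x|)/|x|)))·1_{[−2,2]}(x) is nonnegative and integrates to 1 over ℝ. -/

import Mathlib

open Real

/-- Stationary-type density for the triggered shot noise at order l = 2. -/
noncomputable def f0 (x : ℝ) : ℝ :=
  Set.indicator (Set.Icc (-2 : ℝ) 2)
    (fun x => 1 / π * (Real.sqrt ((2 - |x|) / |x|) - Real.arctan (Real.sqrt ((2 - |x|) / |x|)))) x

noncomputable def gg (x : ℝ) : ℝ :=
  Real.sqrt ((2 - x) / x) - Real.arctan (Real.sqrt ((2 - x) / x))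

lemma arctan_le_self' {t : ℝ} (ht : 0 ≤ t) : arctan t ≤ t := by
  have h0 : 0 ≤ arctan t := by
    simpa [Real.arctan_zero] using Real.arctan_strictMono.monotone ht
  have h2 : arctan t < π / 2 := Real.arctan_lt_pi_div_two t
  calc arctan t ≤ Real.tan (arctan t) := Real.le_tan h0 h2
    _ = t := Real.tan_arctan t

lemma gg_nonneg (x : ℝ) : 0 ≤ gg x := by
  have := arctan_le_self' (Real.sqrt_nonneg ((2 - x) / x))
  simpa [gg] using this

lemma gg_intable : IntervalIntegrable gg MeasureTheory.volume 0 2 := by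
  have hφ : IntervalIntegrable (fun x : ℝ => Real.sqrt 2 * x ^ (-(1/2) : ℝ))
      MeasureTheory.volume 0 2 :=
    (intervalIntegral.intervalIntegrable_rpow' (by norm_num)).const_mul _
  refine hφ.mono_fun ?_ ?_
  · have hm : Measurable gg := by
      have h1 : Measurable fun x : ℝ => (2 - x) / x :=
        (measurable_const.sub measurable_id).div measurable_id
      exact ((Real.continuous_sqrt.measurable.comp h1).sub
        (Real.continuous_arctan.measurable.comp (Real.continuous_sqrt.measurable.comp h1)))
    exact hm.aestronglyMeasurable
  · rw [Set.uIoc_of_le (by norm_num : (0:ℝ) ≤ 2)]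
    refine (MeasureTheory.ae_restrict_iff' measurableSet_Ioc).2 ?_
    refine Filter.Eventually.of_forall fun x hx => ?_
    have hx0 : 0 < x := hx.1
    have h1 : gg x ≤ Real.sqrt ((2 - x) / x) := by
      have := arctan_le_self' (Real.sqrt_nonneg ((2 - x) / x))
      have h0 : 0 ≤ arctan (Real.sqrt ((2-x)/x)) := by
        simpa [Real.arctan_zero] using Real.arctan_strictMono.monotone
          (Real.sqrt_nonneg ((2 - x) / x))
      simp only [gg]; linarith
    have h2 : Real.sqrt ((2 - x) / x) ≤ Real.sqrt 2 * x ^ (-(1/2) : ℝ) := by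
      have hd : (2 - x) / x ≤ 2 / x := by gcongr; linarith
      have hle : Real.sqrt ((2-x)/x) ≤ Real.sqrt (2/x) := Real.sqrt_le_sqrt hd
      have heq : Real.sqrt (2/x) = Real.sqrt 2 * x ^ (-(1/2) : ℝ) := by
        rw [Real.sqrt_div (by norm_num : (0:ℝ) ≤ 2), Real.rpow_neg hx0.le,
          ← Real.sqrt_eq_rpow, div_eq_mul_inv]
      rw [← heq]; exact hle
    have hφ0 : 0 ≤ Real.sqrt 2 * x ^ (-(1/2) : ℝ) :=
      mul_nonneg (Real.sqrt_nonneg 2) (Real.rpow_nonneg hx0.le _)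
    simp only [Real.norm_eq_abs, abs_of_nonneg (gg_nonneg x), abs_of_nonneg hφ0]
    linarith

noncomputable def FF (x : ℝ) : ℝ :=
  (3/2) * Real.sqrt (x * (2 - x)) + (1/2) * Real.arcsin (x - 1)
    - x * Real.arctan (Real.sqrt ((2 - x) / x))

lemma FF_deriv {x : ℝ} (hx : x ∈ Set.Ioo (0:ℝ) 2) : HasDerivAt FF (gg x) x := by
  obtain ⟨hx0, hx2⟩ := hx
  have h2x : 0 < 2 - x := by linarith
  have hp : HasDerivAt (fun y : ℝ => y * (2 - y)) (2 - 2*x) x := by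
    have h := (hasDerivAt_id x).mul ((hasDerivAt_const x (2:ℝ)).sub (hasDerivAt_id x))
    refine h.congr_deriv ?_
    simp only [Pi.sub_apply, id_eq]
    ring
  have hxp : x * (2 - x) ≠ 0 := by positivity
  have h1 : HasDerivAt (fun y : ℝ => Real.sqrt (y * (2 - y)))
      (1 / (2 * Real.sqrt (x * (2-x))) * (2 - 2*x)) x :=
    (Real.hasDerivAt_sqrt hxp).comp x hp
  have hs : HasDerivAt (fun y : ℝ => Real.arcsin (y - 1))
      (1 / Real.sqrt (1 - (x-1)^2) * 1) x :=
    (Real.hasDerivAt_arcsin (by intro h; nlinarith) (by intro h; nlinarith)).comp x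
      ((hasDerivAt_id x).sub_const 1)
  have hq : HasDerivAt (fun y : ℝ => (2 - y)/y) (-2 / x^2) x := by
    have h := ((hasDerivAt_const x (2:ℝ)).sub (hasDerivAt_id x)).div (hasDerivAt_id x) hx0.ne'
    refine h.congr_deriv ?_
    simp only [Pi.sub_apply, id_eq]
    field_simp
    ring
  have hq0 : (2 - x)/x ≠ 0 := by positivity
  have h3 : HasDerivAt (fun y : ℝ => Real.sqrt ((2-y)/y))
      (1/(2*Real.sqrt ((2-x)/x)) * (-2/x^2)) x := by
    have h := HasDerivAt.comp (h₂ := fun y : ℝ => Real.sqrt y) (h := fun y : ℝ => (2-y)/y)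
      x (Real.hasDerivAt_sqrt hq0) hq
    exact h
  have h4 : HasDerivAt (fun y : ℝ => Real.arctan (Real.sqrt ((2-y)/y)))
      (1/(1 + Real.sqrt ((2-x)/x)^2) * (1/(2*Real.sqrt ((2-x)/x)) * (-2/x^2))) x := by
    have h := HasDerivAt.comp (h₂ := fun y : ℝ => Real.arctan y)
      (h := fun y : ℝ => Real.sqrt ((2-y)/y)) x (Real.hasDerivAt_arctan _) h3
    exact h
  have h5 : HasDerivAt (fun y : ℝ => y * Real.arctan (Real.sqrt ((2-y)/y)))
      (1 * Real.arctan (Real.sqrt ((2-x)/x)) +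
        x * (1/(1 + Real.sqrt ((2-x)/x)^2) * (1/(2*Real.sqrt ((2-x)/x)) * (-2/x^2)))) x := by
    have h := (hasDerivAt_id x).mul h4
    exact h
  have hF := ((h1.const_mul (3/2:ℝ)).add (hs.const_mul (1/2:ℝ))).sub h5
  refine hF.congr_deriv (Eq.symm ?_)
  have ha : 0 < Real.sqrt x := Real.sqrt_pos.2 hx0
  have hb : 0 < Real.sqrt (2 - x) := Real.sqrt_pos.2 h2x
  have ha2 : Real.sqrt x ^ 2 = x := Real.sq_sqrt hx0.le
  have hb2 : Real.sqrt (2-x) ^ 2 = 2 - x := Real.sq_sqrt h2x.le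
  rw [show (1 - (x-1)^2 : ℝ) = x * (2-x) by ring]
  rw [Real.sqrt_mul hx0.le, Real.sqrt_div h2x.le]
  set a := Real.sqrt x with ha_def
  set b := Real.sqrt (2 - x) with hb_def
  have hab : a^2 + b^2 = 2 := by rw [ha2, hb2]; ring
  simp only [gg, Real.sqrt_div h2x.le, ← ha_def, ← hb_def]
  rw [← ha2]
  set c := Real.arctan (b / a) with hc_def
  field_simp
  linear_combination (2*b^2+3*a^2) * hab


lemma FF_tendsto_zero : Filter.Tendsto FF (nhdsWithin 0 (Set.Ioi 0)) (nhds (-(π/4))) := by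
  set G : ℝ → ℝ := fun x => (3/2) * Real.sqrt (x * (2 - x)) + (1/2) * Real.arcsin (x - 1)
    - x * (π/2 - Real.arctan (Real.sqrt (x / (2 - x)))) with hG_def
  have hGc : ContinuousAt G 0 := by
    apply ContinuousAt.sub
    · apply ContinuousAt.add
      · exact continuousAt_const.mul ((Real.continuous_sqrt.continuousAt).comp (by fun_prop))
      · exact continuousAt_const.mul ((Real.continuous_arcsin.continuousAt).comp (by fun_prop))
    · apply continuousAt_id.mul
      apply continuousAt_const.sub
      apply (Real.continuous_arctan.continuousAt).comp
      apply (Real.continuous_sqrt.continuousAt).comp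
      exact ContinuousAt.div (by fun_prop) (by fun_prop) (by norm_num)
  have hG0 : G 0 = -(π/4) := by
    have : ((0:ℝ) - 1) = -1 := by norm_num
    simp only [hG_def]
    rw [this]
    norm_num [Real.arcsin_neg_one]
    ring
  have hGt : Filter.Tendsto G (nhdsWithin 0 (Set.Ioi 0)) (nhds (-(π/4))) := by
    rw [← hG0]
    exact hGc.continuousWithinAt.tendsto
  refine hGt.congr' ?_
  filter_upwards [Ioo_mem_nhdsGT_of_mem (by norm_num : (0:ℝ) ∈ Set.Ico (0:ℝ) 2)] with x hx
  obtain ⟨hx0, hx2⟩ := hx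
  have h2x : 0 < 2 - x := by linarith
  have hu : 0 < Real.sqrt ((2 - x) / x) := Real.sqrt_pos.2 (by positivity)
  have hxd : x / (2 - x) = ((2 - x) / x)⁻¹ := (inv_div _ _).symm
  have harc : Real.arctan (Real.sqrt (x / (2 - x)))
      = π/2 - Real.arctan (Real.sqrt ((2 - x) / x)) := by
    rw [hxd, Real.sqrt_inv, Real.arctan_inv_of_pos hu]
  simp only [hG_def, FF, harc]
  ring

lemma FF_tendsto_two : Filter.Tendsto FF (nhdsWithin 2 (Set.Iio 2)) (nhds (π/4)) := by
  have hc : ContinuousAt FF 2 := by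
    apply ContinuousAt.sub
    · apply ContinuousAt.add
      · exact continuousAt_const.mul ((Real.continuous_sqrt.continuousAt).comp (by fun_prop))
      · exact continuousAt_const.mul ((Real.continuous_arcsin.continuousAt).comp (by fun_prop))
    · apply continuousAt_id.mul
      apply (Real.continuous_arctan.continuousAt).comp
      apply (Real.continuous_sqrt.continuousAt).comp
      exact ContinuousAt.div (by fun_prop) (by fun_prop) (by norm_num)
  have hF2 : FF 2 = π/4 := by
    have h1 : ((2:ℝ) - 1) = 1 := by norm_num
    have h2 : ((2:ℝ) - 2) = 0 := by norm_num
    simp only [FF]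
    rw [h1, h2]
    norm_num [Real.arcsin_one]
    ring
  rw [← hF2]
  exact hc.continuousWithinAt.tendsto

lemma gg_integral : ∫ x in (0:ℝ)..2, gg x = π/2 := by
  have h := intervalIntegral.integral_eq_sub_of_hasDerivAt_of_tendsto
    (by norm_num : (0:ℝ) < 2) (fun x hx => FF_deriv hx) gg_intable
    FF_tendsto_zero FF_tendsto_two
  rw [h]
  ring

theorem f0_triggered_is_density :
    (∀ x : ℝ, 0 ≤ f0 x) ∧ (∫ x in (-2 : ℝ)..2, f0 x) = 1 := by
  constructor
  · intro x
    apply Set.indicator_nonneg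
    intro y _
    have := gg_nonneg |y|
    have hπ : (0:ℝ) < π := Real.pi_pos
    have h1 : (0:ℝ) ≤ 1 / π := by positivity
    exact mul_nonneg h1 (by simpa [gg] using gg_nonneg |y|)
  · have hev : ∀ x : ℝ, f0 (-x) = f0 x := by
      intro x
      have hmem : ((-x) ∈ Set.Icc (-2:ℝ) 2) ↔ (x ∈ Set.Icc (-2:ℝ) 2) := by
        simp only [Set.mem_Icc]
        constructor <;> intro h <;> constructor <;> linarith [h.1, h.2]
      simp only [f0, Set.indicator_apply, abs_neg]
      rw [if_congr hmem rfl rfl]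
    have heq02 : ∀ x ∈ Set.uIcc (0:ℝ) 2, f0 x = (1/π) * gg x := by
      intro x hx
      rw [Set.uIcc_of_le (by norm_num : (0:ℝ) ≤ 2)] at hx
      have hmem : x ∈ Set.Icc (-2:ℝ) 2 := ⟨by linarith [hx.1], hx.2⟩
      simp only [f0, Set.indicator_of_mem hmem, gg, abs_of_nonneg hx.1]
    have h02 : IntervalIntegrable f0 MeasureTheory.volume 0 2 := by
      refine (gg_intable.const_mul (1/π)).congr ?_
      intro x hx
      exact (heq02 x (Set.uIoc_subset_uIcc hx)).symm
    have h20 : IntervalIntegrable f0 MeasureTheory.volume (-2) 0 := by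
      have h := (IntervalIntegrable.iff_comp_neg (by simp)).1 h02
      rw [show (fun x : ℝ => f0 (-x)) = f0 from funext hev] at h
      simpa using h.symm
    have hsplit : (∫ x in (-2:ℝ)..2, f0 x)
        = (∫ x in (-2:ℝ)..0, f0 x) + ∫ x in (0:ℝ)..2, f0 x :=
      (intervalIntegral.integral_add_adjacent_intervals h20 h02).symm
    have hneg : (∫ x in (-2:ℝ)..0, f0 x) = ∫ x in (0:ℝ)..2, f0 x := by
      have h1 : (∫ x in (-2:ℝ)..0, f0 x) = ∫ x in (-2:ℝ)..0, f0 (-x) := by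
        refine intervalIntegral.integral_congr fun x _ => (hev x).symm
      rw [h1, intervalIntegral.integral_comp_neg]
      norm_num
    have hval : (∫ x in (0:ℝ)..2, f0 x) = 1/2 := by
      rw [intervalIntegral.integral_congr heq02, intervalIntegral.integral_const_mul,
        gg_integral]
      field_simp
    rw [hsplit, hneg, hval]
    norm_num
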